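/- Let M be an n×n monomial matrix over a field with M^p = I for a prime p. If M is not diagonal, then 1 is an eigenvalue of M. -/

import Mathlib

theorem monomial_matrix_root_of_unity_has_eigenvalue_one
    {K : Type*} [Field K] {n : ℕ} (M : Matrix (Fin n) (Fin n) K)
    {p : ℕ} (hp : p.Prime) (hM : M ^ p = 1)
    (hrow : ∀ i, ∃! j, M i j ≠ 0) (hcol : ∀ j, ∃! i, M i j ≠ 0)
    (hdiag : ¬ ∀ i j, i ≠ j → M i j = 0) :
    M.charpoly.IsRoot 1 := by
  classical
  set σ : Fin n → Fin n := fun i => (hrow i).choose with hσdef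
  have hMσ : ∀ i, M i (σ i) ≠ 0 := fun i => (hrow i).choose_spec.1
  have huniq : ∀ i j, M i j ≠ 0 → j = σ i := fun i j h => (hrow i).choose_spec.2 j h
  have hinj : Function.Injective σ := by
    intro a b hab
    obtain ⟨c, _, hu⟩ := hcol (σ a)
    have ha := hu a (hMσ a)
    have hb := hu b (hab ▸ hMσ b)
    rw [ha, hb]
  -- powers of M
  have hpow : ∀ k (i : Fin n),
      ((M ^ k) i (σ^[k] i) = ∏ m ∈ Finset.range k, M (σ^[m] i) (σ^[m+1] i)) ∧
      (∀ j, j ≠ σ^[k] i → (M ^ k) i j = 0) := by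
    intro k
    induction k with
    | zero =>
      intro i
      refine ⟨by simp, fun j hj => ?_⟩
      simp only [pow_zero]
      exact Matrix.one_apply_ne' (by simpa using hj)
    | succ k ih =>
      intro i
      have hmul : ∀ j, (M ^ (k+1)) i j = (M ^ k) i (σ^[k] i) * M (σ^[k] i) j := by
        intro j
        rw [pow_succ, Matrix.mul_apply]
        rw [Finset.sum_eq_single (σ^[k] i)]
        · intro b _ hb
          rw [(ih i).2 b hb, zero_mul]
        · intro h; exact absurd (Finset.mem_univ _) h
      constructor
      · rw [hmul, (ih i).1, Finset.prod_range_succ, Function.iterate_succ_apply']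
      · intro j hj
        rw [hmul]
        have : M (σ^[k] i) j = 0 := by
          by_contra h
          exact hj ((huniq _ _ h).trans (Function.iterate_succ_apply' σ k i).symm)
        rw [this, mul_zero]
  have hppos : 0 < p := hp.pos
  have hσp : ∀ i : Fin n, σ^[p] i = i := by
    intro i
    have h1 : (M ^ p) i (σ^[p] i) ≠ 0 := by
      rw [(hpow p i).1]
      exact Finset.prod_ne_zero_iff.2 fun m _ => by
        have := hMσ (σ^[m] i)
        rwa [← Function.iterate_succ_apply' σ m i] at this
    rw [hM] at h1
    by_contra h
    exact h1 (Matrix.one_apply_ne fun hh => h hh.symm)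
  have hprod1 : ∀ i : Fin n, ∏ m ∈ Finset.range p, M (σ^[m] i) (σ^[m+1] i) = 1 := by
    intro i
    have := (hpow p i).1
    rw [hσp i, hM, Matrix.one_apply_eq] at this
    exact this.symm
  -- pick i0 with σ i0 ≠ i0
  push_neg at hdiag
  obtain ⟨i0, j0, hij, hMij⟩ := hdiag
  have hfix : σ i0 ≠ i0 := by
    rw [← huniq i0 j0 hMij]; exact fun h => hij h.symm
  -- minimal period is p
  have hper : Function.minimalPeriod σ i0 = p := by
    have hdvd : Function.minimalPeriod σ i0 ∣ p :=
      Function.IsPeriodicPt.minimalPeriod_dvd (hσp i0)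
    rcases (hp.eq_one_or_self_of_dvd _ hdvd) with h1 | h1
    · exfalso
      have := Function.iterate_minimalPeriod (f := σ) (x := i0)
      rw [h1] at this
      exact hfix this
    · exact h1
  have hinjOn : (Set.Iio p).InjOn (fun k => σ^[k] i0) := by
    rw [← hper]; exact Function.iterate_injOn_Iio_minimalPeriod
  -- the eigenvector
  set w : ℕ → K := fun k => (∏ m ∈ Finset.range k, M (σ^[m] i0) (σ^[m+1] i0))⁻¹ with hwdef
  have hw0 : w 0 = 1 := by simp [hwdef]
  have hwp : w p = 1 := by
    show (∏ m ∈ Finset.range p, M (σ^[m] i0) (σ^[m+1] i0))⁻¹ = 1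
    rw [hprod1 i0, inv_one]
  have hwrec : ∀ k, M (σ^[k] i0) (σ^[k+1] i0) * w (k+1) = w k := by
    intro k
    have hne : M (σ^[k] i0) (σ^[k+1] i0) ≠ 0 := by
      have := hMσ (σ^[k] i0)
      rwa [← Function.iterate_succ_apply' σ k i0] at this
    show M (σ^[k] i0) (σ^[k+1] i0) *
        (∏ m ∈ Finset.range (k+1), M (σ^[m] i0) (σ^[m+1] i0))⁻¹ =
        (∏ m ∈ Finset.range k, M (σ^[m] i0) (σ^[m+1] i0))⁻¹
    rw [Finset.prod_range_succ, mul_inv, mul_comm (∏ m ∈ Finset.range k, M (σ^[m] i0) (σ^[m+1] i0))⁻¹,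
      ← mul_assoc, mul_inv_cancel₀ hne, one_mul]
  set v : Fin n → K := fun i => if h : ∃ k, k < p ∧ σ^[k] i0 = i then w (Nat.find h) else 0
    with hvdef
  have hv : ∀ k, k < p → v (σ^[k] i0) = w k := by
    intro k hk
    have hex : ∃ k', k' < p ∧ σ^[k'] i0 = σ^[k] i0 := ⟨k, hk, rfl⟩
    have : Nat.find hex = k := by
      have hspec := Nat.find_spec hex
      exact hinjOn hspec.1 hk hspec.2
    simp only [hvdef, dif_pos hex, this]
  have hv0 : ∀ i, (¬ ∃ k, k < p ∧ σ^[k] i0 = i) → v i = 0 := by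
    intro i h; simp only [hvdef, dif_neg h]
  have hvne : v ≠ 0 := by
    intro h
    have := hv 0 hppos
    rw [h] at this
    simp [hw0] at this
  -- M v = v
  have hMv : M.mulVec v = v := by
    funext i
    have hsum : M.mulVec v i = M i (σ i) * v (σ i) := by
      rw [Matrix.mulVec, dotProduct]
      rw [Finset.sum_eq_single (σ i)]
      · intro b _ hb
        have : M i b = 0 := by
          by_contra h; exact hb (huniq i b h)
        rw [this, zero_mul]
      · intro h; exact absurd (Finset.mem_univ _) h
    rw [hsum]
    by_cases hi : ∃ k, k < p ∧ σ^[k] i0 = i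
    · obtain ⟨k, hk, hki⟩ := hi
      subst hki
      rw [hv k hk]
      have hσi : σ (σ^[k] i0) = σ^[k+1] i0 := (Function.iterate_succ_apply' σ k i0).symm
      rw [hσi]
      rcases Nat.lt_or_ge (k+1) p with h1 | h1
      · rw [hv (k+1) h1]; exact hwrec k
      · have hkp : k + 1 = p := le_antisymm (Nat.succ_le_of_lt hk) h1
        have h0 : σ^[k+1] i0 = i0 := by rw [hkp]; exact hσp i0
        have hvval : v (σ^[k+1] i0) = w (k+1) := by
          rw [h0]
          have h1 := hv 0 hppos
          rw [Function.iterate_zero_apply] at h1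
          rw [h1, hw0, ← hwp, hkp]
        rw [hvval]
        exact hwrec k
    · rw [hv0 i hi]
      have : v (σ i) = 0 := by
        apply hv0
        rintro ⟨k, hk, hki⟩
        apply hi
        rcases Nat.eq_zero_or_pos k with h0 | h0
        · subst h0
          refine ⟨p - 1, by omega, ?_⟩
          apply hinj
          rw [← Function.iterate_succ_apply' σ (p-1) i0]
          have h2 : (p - 1).succ = p := by omega
          rw [h2, hσp i0, ← hki]; rfl
        · refine ⟨k - 1, by omega, ?_⟩
          apply hinj
          rw [← Function.iterate_succ_apply' σ (k-1) i0]
          have h2 : (k - 1).succ = k := by omega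
          rw [h2, hki]
      rw [this, mul_zero]
  -- conclude det(1 - M) = 0
  have hdet : (1 - M).det = 0 := by
    rw [← Matrix.exists_mulVec_eq_zero_iff]
    refine ⟨v, hvne, ?_⟩
    rw [Matrix.sub_mulVec, Matrix.one_mulVec, hMv, sub_self]
  have heval : M.charpoly.eval 1 = (1 - M).det := by
    rw [Matrix.charpoly, eval_det, Matrix.matPolyEquiv_charmatrix]
    simp
  rw [Polynomial.IsRoot, heval, hdet]
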